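/- Assume A(i) and D. Let μ^k = μ̂^k φ_i^k ∈ M_i for k ∈ ℕ ∪ {0}, meaning μ^k({x} × B) = φ_i^k(B|x) μ̂^k(x) with μ̂^k(x) = μ^k({x} × A_i(x)) and φ_i^k ∈ Φ_i. If μ^k → μ^0 weakly in M_i as k → ∞, then for each x ∈ X, μ̂^k(x) → μ̂^0(x) and φ_i^k(·|x) → φ_i^0(·|x) weakly in Pr(A_i(x)). -/

import Mathlib

open MeasureTheory ProbabilityTheory Filter Topology
open scoped ENNReal NNReal

namespace CSGame

/-- The joint action space of the players. -/
abbrev JA {n : ℕ} (A : Fin n → Type) : Type := (i : Fin n) → A i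

/-- The data of a constrained discounted stochastic Markov game:
countable state space `X`, Borel action spaces `A i` with compact admissible
action sets `As i x`, transition probability `p`, initial distribution `η`,
discount factor `α`, cost/constraint functions `c i ℓ` (`ℓ = 0` is the cost,
`ℓ ∈ L = {1,…,l}` are the constraints) and constraint bounds `κ i ℓ`. -/
structure GameData (n l : ℕ) (X : Type) (A : Fin n → Type)
    [MeasurableSpace X] [∀ i, MeasurableSpace (A i)] [∀ i, TopologicalSpace (A i)] where
  As : (i : Fin n) → X → Set (A i)
  p : X → JA A → Measure X
  η : Measure X
  α : ℝ
  c : Fin n → Fin (l + 1) → X → JA A → ℝ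
  κ : Fin n → Fin (l + 1) → ℝ
  hAs_ne : ∀ i x, (As i x).Nonempty
  hAs_cpt : ∀ i x, IsCompact (As i x)
  hp : ∀ x a, IsProbabilityMeasure (p x a)
  hpm : ∀ x y, Measurable fun a => p x a {y}
  hη : IsProbabilityMeasure η
  hα0 : 0 < α
  hα1 : α < 1
  hc : ∀ i ℓ x, Measurable (c i ℓ x)

variable {n l : ℕ}
variable {X : Type} [Countable X] [MeasurableSpace X] [DiscreteMeasurableSpace X]
  [TopologicalSpace X] [DiscreteTopology X] [BorelSpace X] [SecondCountableTopology X]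
variable {A : Fin n → Type} [∀ i, MeasurableSpace (A i)] [∀ i, TopologicalSpace (A i)]
  [∀ i, PolishSpace (A i)] [∀ i, BorelSpace (A i)]

/-- The set of feasible action profiles in state `x` (the section of `𝕂` at `x`). -/
def jointSet (G : GameData n l X A) (x : X) : Set (JA A) :=
  Set.univ.pi fun i => G.As i x

/-- Histories of the game: `Hist X AA t` records the initial state and `t`
state-action transitions, ending with the current state (this is `H^{t+1}`). -/
def Hist (X AA : Type) : ℕ → Type
  | 0 => X
  | t + 1 => Hist X AA t × AA × X

noncomputable instance histMS (X AA : Type) [MeasurableSpace X] [MeasurableSpace AA] :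
    ∀ t, MeasurableSpace (Hist X AA t)
  | 0 => inferInstanceAs (MeasurableSpace X)
  | t + 1 =>
      letI := histMS X AA t
      inferInstanceAs (MeasurableSpace (Hist X AA t × AA × X))

/-- The current (last) state of a history. -/
def lastState (X AA : Type) : ∀ t, Hist X AA t → X
  | 0, h => h
  | _ + 1, h => h.2.2

theorem measurable_lastState (X AA : Type) [MeasurableSpace X] [MeasurableSpace AA] :
    ∀ t, Measurable (lastState X AA t)
  | 0 => measurable_id
  | _ + 1 => measurable_snd.comp measurable_snd

variable (G : GameData n l X A)

/-- A (history dependent, randomised) strategy of player `i`: a sequence of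
transition probabilities from histories to the action space of player `i`,
concentrated on the admissible action set at the current state. -/
structure Strategy (i : Fin n) where
  f : ∀ t, Hist X (JA A) t → ProbabilityMeasure (A i)
  meas : ∀ t (s : Set (A i)), MeasurableSet s →
    Measurable fun h => (f t h : Measure (A i)) s
  supp : ∀ t h, f t h (G.As i (lastState X (JA A) t h)) = 1

/-- A stationary strategy of player `i`: a transition probability from states to
actions, concentrated on the admissible action set. -/
def Stat (i : Fin n) : Type :=
  {φ : X → ProbabilityMeasure (A i) // ∀ x, φ x (G.As i x) = 1}

noncomputable instance (i : Fin n) : TopologicalSpace (Stat G i) :=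
  inferInstanceAs (TopologicalSpace
    {φ : X → ProbabilityMeasure (A i) // ∀ x, φ x (G.As i x) = 1})

/-- Multi-strategies: one strategy for each player. -/
abbrev MultiStrategy : Type _ := ∀ i, Strategy G i

/-- Stationary multi-strategies (the set `Φ`). -/
abbrev StatProfile : Type _ := ∀ i, Stat G i

noncomputable instance : TopologicalSpace (StatProfile G) :=
  inferInstanceAs (TopologicalSpace (∀ i, Stat G i))

/-- The strategy induced by a stationary strategy. -/
noncomputable def ofStat (i : Fin n) (φ : Stat G i) : Strategy G i where
  f := fun t h => φ.1 (lastState X (JA A) t h)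
  meas := fun t _s _hs =>
    (Measurable.of_discrete (f := fun x => (φ.1 x : Measure (A i)) _s)).comp
      (measurable_lastState X (JA A) t)
  supp := fun t h => φ.2 _

/-- The multi-strategy induced by a stationary multi-strategy. -/
noncomputable def ofStatAll (φ : StatProfile G) : MultiStrategy G :=
  fun i => ofStat G i (φ i)

/-- `[π_{-i}, σ]` : player `i` deviates to `σ`, the others keep `π`. -/
noncomputable def combine (π : MultiStrategy G) (i : Fin n) (σ : Strategy G i) :
    MultiStrategy G :=
  Function.update π i σ

/-- `[φ_{-i}, γ]` for stationary profiles. -/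
noncomputable def updStat (φ : StatProfile G) (i : Fin n) (γ : Stat G i) :
    StatProfile G :=
  Function.update φ i γ

/-- The joint (product) distribution of the players' actions after history `h`. -/
noncomputable def jointLaw (π : MultiStrategy G) (t : ℕ) (h : Hist X (JA A) t) :
    Measure (JA A) :=
  Measure.pi fun i => ((π i).f t h : Measure (A i))

/-- The distribution of histories of length `t` under the multi-strategy `π`,
the transition probability `G.p` and the initial distribution `η'`
(the finite-dimensional marginals of the Ionescu–Tulcea measure `P^π_{η'}`). -/
noncomputable def histMeas (η' : Measure X) (π : MultiStrategy G) :
    ∀ t, Measure (Hist X (JA A) t)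
  | 0 => η'
  | t + 1 =>
      (histMeas η' π t).bind fun h =>
        (jointLaw G π t h).bind fun a =>
          (G.p (lastState X (JA A) t h) a).map fun y =>
            (show Hist X (JA A) (t + 1) from (h, a, y))

/-- Expected value of `f (x^{t+1}, a^{t+1})` under `π` (states enumerated from `1`
in the paper, from `0` here). -/
noncomputable def stageExp (η' : Measure X) (π : MultiStrategy G) (t : ℕ)
    (f : X → JA A → ℝ) : ℝ :=
  ∫ h, (∫ a, f (lastState X (JA A) t h) a ∂(jointLaw G π t h)) ∂(histMeas G η' π t)

/-- The expected discounted cost functional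
`J(π) = (1-α) E^π_{η'} [∑_{t≥1} α^{t-1} f(x^t,a^t)]`. -/
noncomputable def Jfun (η' : Measure X) (f : X → JA A → ℝ) (π : MultiStrategy G) : ℝ :=
  (1 - G.α) * ∑' t : ℕ, G.α ^ t * stageExp G η' π t f

/-- `J_i^ℓ(π)` of the paper. -/
noncomputable def J (i : Fin n) (ℓ : Fin (l + 1)) (π : MultiStrategy G) : ℝ :=
  Jfun G G.η (G.c i ℓ) π

/-- `π_i ∈ Δ_i(π_{-i})` : all constraints of player `i` are satisfied. -/
def Feas (i : Fin n) (π : MultiStrategy G) : Prop :=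
  ∀ ℓ : Fin (l + 1), ℓ ≠ 0 → J G i ℓ π ≤ G.κ i ℓ

/-- Expectation of `w(x^{t+1})` (as an extended nonnegative real). -/
noncomputable def wStateExp (η' : Measure X) (π : MultiStrategy G) (t : ℕ)
    (w : X → ℝ) : ℝ≥0∞ :=
  ∫⁻ h, ENNReal.ofReal (w (lastState X (JA A) t h)) ∂(histMeas G η' π t)

/-- Assumption A(i): continuity of the transition probability in the actions. -/
def AssumptionA1 : Prop :=
  ∀ x y, ContinuousOn (fun a => G.p x a {y}) (jointSet G x)

/-- Assumption A: continuity of the transition probability and of the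
cost/constraint functions in the actions. -/
def AssumptionA : Prop :=
  AssumptionA1 G ∧ ∀ i ℓ x, ContinuousOn (G.c i ℓ x) (jointSet G x)

/-- Assumption B for the weight function `w`: `w ≥ 1` bounds all the costs on `𝕂`,
the discounted tails `sup_π (1-α) E^π_η[∑_{t≥k} α^{t-1} w(x^t)]` vanish as `k → ∞`,
and for each stage `t` the family `{w(x^t)}` is uniformly integrable over all
multi-strategies. -/
def AssumptionB (w : X → ℝ) : Prop :=
  (∀ x, 1 ≤ w x) ∧
  (∀ i ℓ x a, a ∈ jointSet G x → |G.c i ℓ x a| ≤ w x) ∧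
  Tendsto (fun k : ℕ => ⨆ π : MultiStrategy G,
      ENNReal.ofReal (1 - G.α) *
        ∑' t : ℕ, ENNReal.ofReal G.α ^ (k + t) * wStateExp G G.η π (k + t) w)
    atTop (𝓝 0) ∧
  ∀ t : ℕ, Tendsto (fun k : ℕ => ⨆ π : MultiStrategy G,
      ∫⁻ h in {h | (k : ℝ) ≤ w (lastState X (JA A) t h)},
        ENNReal.ofReal (w (lastState X (JA A) t h)) ∂(histMeas G G.η π t))
    atTop (𝓝 0)

/-- Assumption C (Slater condition). -/
def AssumptionC : Prop :=
  ∀ (φ : StatProfile G) (i : Fin n), ∃ π : Strategy G i,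
    ∀ ℓ : Fin (l + 1), ℓ ≠ 0 → J G i ℓ (combine G (ofStatAll G φ) i π) < G.κ i ℓ

/-- Assumption D: the initial distribution charges every state. -/
def AssumptionD : Prop :=
  ∀ x : X, 0 < G.η {x}

/-- Assumption W (weighted-norm conditions of Wessels). -/
def AssumptionW (w : X → ℝ) : Prop :=
  (∀ x, 1 ≤ w x) ∧
  (∀ i ℓ x a, a ∈ jointSet G x → |G.c i ℓ x a| ≤ w x) ∧
  (∃ δ : ℝ, 1 ≤ δ ∧ δ * G.α < 1 ∧ ∀ x a, a ∈ jointSet G x →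
      ∫⁻ y, ENNReal.ofReal (w y) ∂(G.p x a) ≤ ENNReal.ofReal (δ * w x)) ∧
  (∀ x, ContinuousOn (fun a => ∫⁻ y, ENNReal.ofReal (w y) ∂(G.p x a)) (jointSet G x)) ∧
  (∫⁻ y, ENNReal.ofReal (w y) ∂G.η) < ⊤

/-- All cost and constraint functions are bounded. -/
def BoundedCosts : Prop :=
  ∀ i (ℓ : Fin (l + 1)), ∃ C : ℝ, ∀ x a, |G.c i ℓ x a| ≤ C

/-- A stationary multi-strategy `φ` is a Nash equilibrium of the constrained game:
it is feasible, and no player can lower his discounted cost by a unilateral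
deviation to any (history dependent) strategy satisfying his constraints. -/
def IsNashStat (φ : StatProfile G) : Prop :=
  (∀ i, Feas G i (ofStatAll G φ)) ∧
  ∀ (i : Fin n) (σ : Strategy G i), Feas G i (combine G (ofStatAll G φ) i σ) →
    J G i 0 (ofStatAll G φ) ≤ J G i 0 (combine G (ofStatAll G φ) i σ)

section Occupation

/-- A correlated strategy of the players. -/
structure CorrStrategy where
  f : ∀ t, Hist X (JA A) t → ProbabilityMeasure (JA A)
  meas : ∀ t (s : Set (JA A)), MeasurableSet s →
    Measurable fun h => (f t h : Measure (JA A)) s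
  supp : ∀ t h, f t h (jointSet G (lastState X (JA A) t h)) = 1

/-- History distributions under a correlated strategy. -/
noncomputable def histMeasC (π : CorrStrategy G) : ∀ t, Measure (Hist X (JA A) t)
  | 0 => G.η
  | t + 1 =>
      (histMeasC π t).bind fun h =>
        ((π.f t h : Measure (JA A))).bind fun a =>
          (G.p (lastState X (JA A) t h) a).map fun y =>
            (show Hist X (JA A) (t + 1) from (h, a, y))

/-- The occupation measure `ρ(K') = (1-α) E^π_η [∑_{t≥1} α^{t-1} 1_{K'}(x^t,a^t)]`
of a correlated strategy, as a measure on the state–action pairs. -/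
noncomputable def occ (π : CorrStrategy G) : Measure (X × JA A) :=
  ENNReal.ofReal (1 - G.α) •
    Measure.sum fun t : ℕ => ENNReal.ofReal G.α ^ t •
      ((histMeasC G π t).bind fun h =>
        (π.f t h : Measure (JA A)).map fun a => (lastState X (JA A) t h, a))

/-- The set `𝓜` of occupation measures of correlated strategies. -/
def OccSet : Set (ProbabilityMeasure (X × JA A)) :=
  {ρ | ∃ π : CorrStrategy G, (ρ : Measure (X × JA A)) = occ G π}

/-- Projection of a state–action pair onto the coordinates of player `i`. -/
def projAct (i : Fin n) : X × JA A → X × A i := fun q => (q.1, q.2 i)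

/-- The set `𝓜_i` of statewise projections of occupation measures onto `𝕂_i`. -/
def MiSet (i : Fin n) : Set (ProbabilityMeasure (X × A i)) :=
  {μ | ∃ ρ ∈ OccSet G, (μ : Measure (X × A i)) = (ρ : Measure (X × JA A)).map (projAct i)}

/-- The marginal `μ̂(x) = μ({x} × A_i(x))`. -/
noncomputable def marg (i : Fin n) (μ : ProbabilityMeasure (X × A i)) (x : X) : ℝ≥0∞ :=
  (μ : Measure (X × A i)) ({x} ×ˢ G.As i x)

/-- `μ = μ̂ φ` : `φ` disintegrates `μ`, i.e. `μ({x} × B) = φ(B|x) μ̂(x)`. -/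
def Disint (i : Fin n) (μ : ProbabilityMeasure (X × A i)) (φ : Stat G i) : Prop :=
  ∀ x (B : Set (A i)), MeasurableSet B → B ⊆ G.As i x →
    (μ : Measure (X × A i)) ({x} ×ˢ B) = (φ.1 x B : ℝ≥0∞) * marg G i μ x

/-- The occupation measure on state–action pairs of a multi-strategy. -/
noncomputable def occMulti (η' : Measure X) (π : MultiStrategy G) : Measure (X × JA A) :=
  ENNReal.ofReal (1 - G.α) •
    Measure.sum fun t : ℕ => ENNReal.ofReal G.α ^ t •
      ((histMeas G η' π t).bind fun h =>
        (jointLaw G π t h).map fun a => (lastState X (JA A) t h, a))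

end Occupation

section COP

/-- The product distribution on action profiles in state `x` in which player `i`
plays the fixed action `ai` and every player `j ≠ i` plays `φ j`. -/
noncomputable def statJoint (φ : StatProfile G) (i : Fin n) (x : X) (ai : A i) :
    Measure (JA A) :=
  Measure.pi fun j =>
    if h : j = i then Measure.dirac (cast (congrArg A h.symm) ai)
    else ((φ j).1 x : Measure (A j))

/-- `c_i^ℓ(x, [φ_{-i}(x), a_i])`. -/
noncomputable def cbar (φ : StatProfile G) (i : Fin n) (ℓ : Fin (l + 1)) (x : X)
    (ai : A i) : ℝ :=
  ∫ a, G.c i ℓ x a ∂(statJoint G φ i x ai)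

/-- `p(y | x, [φ_{-i}(x), a_i])`. -/
noncomputable def pbar (φ : StatProfile G) (i : Fin n) (y x : X) (ai : A i) : ℝ≥0∞ :=
  ∫⁻ a, G.p x a {y} ∂(statJoint G φ i x ai)

/-- Feasibility in the constrained optimisation problem `COP(φ_{-i})`:
`μ ∈ Pr(𝕂_i)` satisfies the constraint inequalities and the characteristic
equations of occupation measures. -/
def COPFeasible (φ : StatProfile G) (i : Fin n)
    (μ : ProbabilityMeasure (X × A i)) : Prop :=
  (μ : Measure (X × A i)) {q : X × A i | q.2 ∈ G.As i q.1} = 1 ∧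
  (∀ ℓ : Fin (l + 1), ℓ ≠ 0 →
    ∫ q : X × A i, cbar G φ i ℓ q.1 q.2 ∂(μ : Measure (X × A i)) ≤ G.κ i ℓ) ∧
  ∀ x : X, (μ : Measure (X × A i)) ({x} ×ˢ G.As i x) =
    ENNReal.ofReal (1 - G.α) * G.η {x} +
      ENNReal.ofReal G.α *
        ∫⁻ q : X × A i, pbar G φ i x q.1 q.2 ∂(μ : Measure (X × A i))

/-- The objective of `COP(φ_{-i})`. -/
noncomputable def COPObj (φ : StatProfile G) (i : Fin n)
    (μ : ProbabilityMeasure (X × A i)) : ℝ :=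
  ∫ q : X × A i, cbar G φ i 0 q.1 q.2 ∂(μ : Measure (X × A i))

/-- The solution set `𝓞_i(φ_{-i})` of `COP(φ_{-i})`. -/
def COPSol (φ : StatProfile G) (i : Fin n) : Set (ProbabilityMeasure (X × A i)) :=
  {μ | COPFeasible G φ i μ ∧
    ∀ ν, COPFeasible G φ i ν → COPObj G φ i μ ≤ COPObj G φ i ν}

end COP

section Perturbed

/-- `η̃` is a probability measure charging exactly the `η`-null states `X_0`. -/
def IsPerturb (ηt : Measure X) : Prop :=
  IsProbabilityMeasure ηt ∧ (∀ x, G.η {x} = 0 → 0 < ηt {x}) ∧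
    ∀ x, G.η {x} ≠ 0 → ηt {x} = 0

/-- The perturbed initial distribution `η(m) = (1 - 1/m) η + (1/m) η̃`. -/
noncomputable def etam (ηt : Measure X) (m : ℕ) : Measure X :=
  ENNReal.ofReal (1 - 1 / (m : ℝ)) • G.η + ENNReal.ofReal (1 / (m : ℝ)) • ηt

/-- The truncation `c_i^{ℓ,m}` of `c_i^ℓ` at the level `√m`. -/
noncomputable def ctrunc (i : Fin n) (ℓ : Fin (l + 1)) (m : ℕ) (x : X) (a : JA A) : ℝ :=
  max (-Real.sqrt m) (min (G.c i ℓ x a) (Real.sqrt m))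

/-- `J_i^{ℓ,η(m)}`: discounted cost with truncated costs and perturbed initial
distribution. -/
noncomputable def Jm (ηt : Measure X) (m : ℕ) (i : Fin n) (ℓ : Fin (l + 1))
    (π : MultiStrategy G) : ℝ :=
  Jfun G (etam G ηt m) (ctrunc G i ℓ m) π

/-- The perturbed constraint bounds `κ_i^{ℓ,m} = (1 - 1/m) κ_i^ℓ + 1/√m`. -/
noncomputable def kappam (i : Fin n) (ℓ : Fin (l + 1)) (m : ℕ) : ℝ :=
  (1 - 1 / (m : ℝ)) * G.κ i ℓ + 1 / Real.sqrt m

/-- `π_i ∈ Δ_i^m(π_{-i})` : the constraints of the `m`-CSG hold. -/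
def FeasM (ηt : Measure X) (m : ℕ) (i : Fin n) (π : MultiStrategy G) : Prop :=
  ∀ ℓ : Fin (l + 1), ℓ ≠ 0 → Jm G ηt m i ℓ π ≤ kappam G i ℓ m

end Perturbed

end CSGame

open CSGame

namespace CSGame

variable {n l : ℕ}
variable {X : Type} [Countable X] [MeasurableSpace X] [DiscreteMeasurableSpace X]
  [TopologicalSpace X] [DiscreteTopology X] [BorelSpace X] [SecondCountableTopology X]
variable {A : Fin n → Type} [∀ i, MeasurableSpace (A i)] [∀ i, TopologicalSpace (A i)]
  [∀ i, PolishSpace (A i)] [∀ i, BorelSpace (A i)]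
variable (G : GameData n l X A)


open scoped Classical

section Stmt8Aux

lemma mble_jointSet (x : X) : MeasurableSet (jointSet G x) :=
  (isClosed_set_pi fun j _ => (G.hAs_cpt j x).isClosed).measurableSet

lemma mble_K : MeasurableSet {q : X × JA A | q.2 ∈ jointSet G q.1} := by
  have : {q : X × JA A | q.2 ∈ jointSet G q.1} = ⋃ x : X, {x} ×ˢ jointSet G x := by
    ext ⟨y, a⟩
    simp only [Set.mem_setOf_eq, Set.mem_iUnion, Set.mem_prod, Set.mem_singleton_iff]
    constructor
    · intro h; exact ⟨y, rfl, h⟩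
    · rintro ⟨x, rfl, h⟩; exact h
  rw [this]
  exact MeasurableSet.iUnion fun x => (measurableSet_singleton x).prod (mble_jointSet G x)

lemma mble_S (i : Fin n) : MeasurableSet {q : X × A i | q.2 ∈ G.As i q.1} := by
  have : {q : X × A i | q.2 ∈ G.As i q.1} = ⋃ x : X, {x} ×ˢ G.As i x := by
    ext ⟨y, a⟩
    simp only [Set.mem_setOf_eq, Set.mem_iUnion, Set.mem_prod, Set.mem_singleton_iff]
    constructor
    · intro h; exact ⟨y, rfl, h⟩
    · rintro ⟨x, rfl, h⟩; exact h
  rw [this]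
  exact MeasurableSet.iUnion fun x =>
    (measurableSet_singleton x).prod (G.hAs_cpt i x).isClosed.measurableSet

lemma measurable_projAct (i : Fin n) : Measurable (projAct (X := X) (A := A) i) :=
  measurable_fst.prodMk ((measurable_pi_apply i).comp measurable_snd)

lemma occ_null (π : CorrStrategy G) :
    occ G π {q : X × JA A | q.2 ∉ jointSet G q.1} = 0 := by
  have hKc : MeasurableSet {q : X × JA A | q.2 ∉ jointSet G q.1} := (mble_K G).compl
  have hterm : ∀ t, ((histMeasC G π t).bind fun h =>
      (π.f t h : Measure (JA A)).map fun a => (lastState X (JA A) t h, a))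
      {q : X × JA A | q.2 ∉ jointSet G q.1} = 0 := by
    intro t
    have hbind : ((histMeasC G π t).bind fun h =>
        (π.f t h : Measure (JA A)).map fun a => (lastState X (JA A) t h, a)) =
        ((histMeasC G π t).map fun h =>
          (π.f t h : Measure (JA A)).map fun a => (lastState X (JA A) t h, a)).join := rfl
    by_cases hm : AEMeasurable (fun h => (π.f t h : Measure (JA A)).map
        (fun a => (lastState X (JA A) t h, a))) (histMeasC G π t)
    · rw [hbind, Measure.join_apply hKc,
        lintegral_map' (Measure.measurable_coe hKc).aemeasurable hm]
      have hz : ∀ h, (π.f t h : Measure (JA A)).map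
          (fun a => (lastState X (JA A) t h, a))
          {q : X × JA A | q.2 ∉ jointSet G q.1} = 0 := by
        intro h
        rw [Measure.map_apply measurable_prodMk_left hKc]
        have h1 : (π.f t h : Measure (JA A)) (jointSet G (lastState X (JA A) t h)) = 1 := by
          rw [← ProbabilityMeasure.ennreal_coeFn_eq_coeFn_toMeasure, π.supp t h,
            ENNReal.coe_one]
        have h0 : (π.f t h : Measure (JA A))
            (jointSet G (lastState X (JA A) t h))ᶜ = 0 :=
          (prob_compl_eq_zero_iff (mble_jointSet G _)).mpr h1
        refine measure_mono_null ?_ h0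
        intro a ha; exact ha
      simp only [hz]
      exact lintegral_zero
    · rw [hbind, Measure.map_of_not_aemeasurable hm, Measure.join_zero]
      rfl
  rw [occ, Measure.smul_apply, Measure.sum_apply _ hKc]
  simp [hterm]

lemma conc_of_mem (i : Fin n) {μ : ProbabilityMeasure (X × A i)} (hμ : μ ∈ MiSet G i) :
    (μ : Measure (X × A i)) {q : X × A i | q.2 ∉ G.As i q.1} = 0 := by
  obtain ⟨ρ, ⟨π, hπ⟩, hmap⟩ := hμ
  have hSc : MeasurableSet {q : X × A i | q.2 ∉ G.As i q.1} := (mble_S G i).compl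
  rw [hmap, Measure.map_apply (measurable_projAct i) hSc, hπ]
  refine measure_mono_null ?_ (occ_null G π)
  rintro ⟨y, a⟩ ha hja
  exact ha (hja i (Set.mem_univ i))

lemma marg_eq_univ (i : Fin n) {μ : ProbabilityMeasure (X × A i)} (hμ : μ ∈ MiSet G i)
    (x : X) :
    marg G i μ x = (μ : Measure (X × A i)) ({x} ×ˢ (Set.univ : Set (A i))) := by
  refine le_antisymm (measure_mono (Set.prod_mono le_rfl (Set.subset_univ _))) ?_
  calc (μ : Measure (X × A i)) ({x} ×ˢ (Set.univ : Set (A i)))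
      ≤ (μ : Measure (X × A i))
        (({x} ×ˢ G.As i x) ∪ {q : X × A i | q.2 ∉ G.As i q.1}) := by
        refine measure_mono ?_
        rintro ⟨y, a⟩ ⟨hy, -⟩
        rcases Set.mem_singleton_iff.mp hy with rfl
        by_cases ha : a ∈ G.As i y
        · exact Or.inl ⟨rfl, ha⟩
        · exact Or.inr ha
    _ ≤ (μ : Measure (X × A i)) ({x} ×ˢ G.As i x) +
        (μ : Measure (X × A i)) {q : X × A i | q.2 ∉ G.As i q.1} := measure_union_le _ _
    _ = marg G i μ x := by rw [conc_of_mem G i hμ, add_zero]; rfl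

lemma slice_eq (i : Fin n) {μ : ProbabilityMeasure (X × A i)} {φ : Stat G i}
    (hc : (μ : Measure (X × A i)) {q : X × A i | q.2 ∉ G.As i q.1} = 0)
    (hd : Disint G i μ φ) (x : X) {B : Set (A i)} (hB : MeasurableSet B) :
    (μ : Measure (X × A i)) ({x} ×ˢ B) =
      (φ.1 x : Measure (A i)) B * marg G i μ x := by
  have hAsm : MeasurableSet (G.As i x) := (G.hAs_cpt i x).isClosed.measurableSet
  have hφc : (φ.1 x : Measure (A i)) (G.As i x)ᶜ = 0 := by
    refine (prob_compl_eq_zero_iff hAsm).mpr ?_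
    rw [← ProbabilityMeasure.ennreal_coeFn_eq_coeFn_toMeasure, φ.2 x, ENNReal.coe_one]
  have h1 : (μ : Measure (X × A i)) ({x} ×ˢ B) =
      (μ : Measure (X × A i)) ({x} ×ˢ (B ∩ G.As i x)) := by
    refine le_antisymm ?_ (measure_mono (Set.prod_mono le_rfl Set.inter_subset_left))
    calc (μ : Measure (X × A i)) ({x} ×ˢ B)
        ≤ (μ : Measure (X × A i))
          (({x} ×ˢ (B ∩ G.As i x)) ∪ {q : X × A i | q.2 ∉ G.As i q.1}) := by
          refine measure_mono ?_
          rintro ⟨y, a⟩ ⟨hy, haB⟩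
          rcases Set.mem_singleton_iff.mp hy with rfl
          by_cases ha : a ∈ G.As i y
          · exact Or.inl ⟨rfl, haB, ha⟩
          · exact Or.inr ha
      _ ≤ _ + _ := measure_union_le _ _
      _ = (μ : Measure (X × A i)) ({x} ×ˢ (B ∩ G.As i x)) := by rw [hc, add_zero]
  have h2 : (φ.1 x : Measure (A i)) B = (φ.1 x : Measure (A i)) (B ∩ G.As i x) := by
    refine le_antisymm ?_ (measure_mono Set.inter_subset_left)
    calc (φ.1 x : Measure (A i)) B
        ≤ (φ.1 x : Measure (A i)) ((B ∩ G.As i x) ∪ (G.As i x)ᶜ) := by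
          refine measure_mono ?_
          intro a haB
          by_cases ha : a ∈ G.As i x
          · exact Or.inl ⟨haB, ha⟩
          · exact Or.inr ha
      _ ≤ _ + _ := measure_union_le _ _
      _ = (φ.1 x : Measure (A i)) (B ∩ G.As i x) := by rw [hφc, add_zero]
  rw [h1, hd x _ (hB.inter hAsm) Set.inter_subset_right, h2,
    ProbabilityMeasure.ennreal_coeFn_eq_coeFn_toMeasure]

lemma integral_slice (i : Fin n) {μ : ProbabilityMeasure (X × A i)} {φ : Stat G i}
    (hc : (μ : Measure (X × A i)) {q : X × A i | q.2 ∉ G.As i q.1} = 0)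
    (hd : Disint G i μ φ) (x : X) (f : BoundedContinuousFunction (A i) ℝ) :
    ∫ q : X × A i, (if q.1 = x then (1:ℝ) else 0) * f q.2 ∂(μ : Measure (X × A i)) =
      (marg G i μ x).toReal * ∫ a, f a ∂(φ.1 x : Measure (A i)) := by
  have hE : MeasurableSet ({x} ×ˢ (Set.univ : Set (A i))) :=
    (measurableSet_singleton x).prod MeasurableSet.univ
  have hν : Measure.map Prod.snd
      ((μ : Measure (X × A i)).restrict ({x} ×ˢ (Set.univ : Set (A i)))) =
      marg G i μ x • (φ.1 x : Measure (A i)) := by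
    ext B hB
    rw [Measure.map_apply measurable_snd hB, Measure.restrict_apply (measurable_snd hB),
      Measure.smul_apply, smul_eq_mul]
    have hset : Prod.snd ⁻¹' B ∩ ({x} ×ˢ (Set.univ : Set (A i))) = {x} ×ˢ B := by
      ext ⟨y, a⟩
      simp only [Set.mem_inter_iff, Set.mem_preimage, Set.mem_prod, Set.mem_singleton_iff,
        Set.mem_univ, and_true]
      tauto
    rw [hset, slice_eq G i hc hd x hB, mul_comm]
  calc ∫ q : X × A i, (if q.1 = x then (1:ℝ) else 0) * f q.2 ∂(μ : Measure (X × A i))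
      = ∫ q : X × A i, Set.indicator ({x} ×ˢ (Set.univ : Set (A i)))
          (fun q : X × A i => f q.2) q ∂(μ : Measure (X × A i)) := by
        congr 1; funext q
        rw [Set.indicator_apply]
        by_cases h : q.1 = x
        · rw [if_pos h, if_pos (show q ∈ ({x} ×ˢ (Set.univ : Set (A i))) from
            ⟨h, Set.mem_univ _⟩), one_mul]
        · rw [if_neg h, if_neg
            (fun hq : q ∈ ({x} ×ˢ (Set.univ : Set (A i))) => h hq.1), zero_mul]
    _ = ∫ q in ({x} ×ˢ (Set.univ : Set (A i))), f q.2 ∂(μ : Measure (X × A i)) :=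
        integral_indicator hE
    _ = ∫ a, f a ∂(Measure.map Prod.snd
          ((μ : Measure (X × A i)).restrict ({x} ×ˢ (Set.univ : Set (A i))))) :=
        (integral_map measurable_snd.aemeasurable f.continuous.aestronglyMeasurable).symm
    _ = (marg G i μ x).toReal * ∫ a, f a ∂(φ.1 x : Measure (A i)) := by
        rw [hν, integral_smul_measure, smul_eq_mul]

lemma marg_pos (hD : AssumptionD G) (i : Fin n) {μ : ProbabilityMeasure (X × A i)}
    (hμ : μ ∈ MiSet G i) (x : X) : 0 < marg G i μ x := by
  obtain ⟨ρ, ⟨π, hπ⟩, hmap⟩ := hμ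
  have hFm : MeasurableSet (Prod.fst ⁻¹' ({x} : Set X) : Set (X × JA A)) :=
    measurable_fst (measurableSet_singleton x)
  have hm0 : ((G.η).bind fun h : X =>
      (π.f 0 h : Measure (JA A)).map fun a => (lastState X (JA A) 0 h, a))
      (Prod.fst ⁻¹' ({x} : Set X)) = G.η {x} := by
    rw [Measure.bind_apply hFm Measurable.of_discrete.aemeasurable]
    have hz : ∀ y : X, ((π.f 0 y : Measure (JA A)).map fun a => (lastState X (JA A) 0 y, a))
        (Prod.fst ⁻¹' ({x} : Set X)) = ({x} : Set X).indicator 1 y := by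
      intro y
      rw [Measure.map_apply measurable_prodMk_left hFm]
      by_cases h : y = x
      · have : ((fun a : JA A => ((lastState X (JA A) 0 y : X), a)) ⁻¹'
            (Prod.fst ⁻¹' ({x} : Set X))) = Set.univ := by
          ext a; simp [lastState, h]
        rw [this]
        simp [Set.indicator_apply, h]
      · have : ((fun a : JA A => ((lastState X (JA A) 0 y : X), a)) ⁻¹'
            (Prod.fst ⁻¹' ({x} : Set X))) = ∅ := by
          ext a; simp [lastState, h]
        rw [this]
        simp [Set.indicator_apply, h]
    simp only [hz]
    rw [lintegral_indicator_one (measurableSet_singleton x)]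
  have hineq : ENNReal.ofReal (1 - G.α) * G.η {x} ≤ marg G i μ x := by
    have hproj : (projAct (X := X) (A := A) i) ⁻¹' ({x} ×ˢ (Set.univ : Set (A i))) =
        (Prod.fst ⁻¹' ({x} : Set X) : Set (X × JA A)) := by
      ext q
      simp only [Set.mem_preimage, projAct, Set.mem_prod, Set.mem_singleton_iff,
        Set.mem_univ, and_true]
    rw [marg_eq_univ G i ⟨ρ, ⟨π, hπ⟩, hmap⟩ x, hmap,
      Measure.map_apply (measurable_projAct i)
        ((measurableSet_singleton x).prod MeasurableSet.univ), hproj, hπ, occ,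
      Measure.smul_apply, Measure.sum_apply _ hFm, smul_eq_mul]
    refine mul_le_mul_right ?_ _
    calc G.η {x} = (ENNReal.ofReal G.α) ^ 0 •
        (((histMeasC G π 0).bind fun h =>
          (π.f 0 h : Measure (JA A)).map fun a => (lastState X (JA A) 0 h, a))
          (Prod.fst ⁻¹' ({x} : Set X))) := by
          rw [pow_zero, one_smul]
          exact hm0.symm
      _ ≤ _ := by
          exact ENNReal.le_tsum 0
  refine lt_of_lt_of_le ?_ hineq
  refine ENNReal.mul_pos ?_ ?_
  · exact (ENNReal.ofReal_pos.mpr (by linarith [G.hα1])).ne'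
  · exact (hD x).ne'

end Stmt8Aux

/-- Lemma 4. -/
theorem stmt8 (hA1 : AssumptionA1 G) (hD : AssumptionD G) (i : Fin n)
    (μk : ℕ → ProbabilityMeasure (X × A i)) (μ0 : ProbabilityMeasure (X × A i))
    (hμk : ∀ k, μk k ∈ MiSet G i) (hμ0 : μ0 ∈ MiSet G i)
    (φk : ℕ → Stat G i) (φ0 : Stat G i)
    (hdk : ∀ k, Disint G i (μk k) (φk k)) (hd0 : Disint G i μ0 φ0)
    (hconv : Tendsto μk atTop (𝓝 μ0)) :
    ∀ x : X, Tendsto (fun k => marg G i (μk k) x) atTop (𝓝 (marg G i μ0 x)) ∧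
      Tendsto (fun k => (φk k).1 x) atTop (𝓝 (φ0.1 x)) := by
  intro x
  have hconc0 : (μ0 : Measure (X × A i)) {q : X × A i | q.2 ∉ G.As i q.1} = 0 :=
    conc_of_mem G i hμ0
  have hconck : ∀ k, ((μk k : Measure (X × A i))) {q : X × A i | q.2 ∉ G.As i q.1} = 0 :=
    fun k => conc_of_mem G i (hμk k)
  have key : ∀ f : BoundedContinuousFunction (A i) ℝ,
      Tendsto (fun k => (marg G i (μk k) x).toReal *
          ∫ a, f a ∂((φk k).1 x : Measure (A i))) atTop
        (𝓝 ((marg G i μ0 x).toReal * ∫ a, f a ∂(φ0.1 x : Measure (A i)))) := by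
    intro f
    have hgc : Continuous (fun q : X × A i => (if q.1 = x then (1:ℝ) else 0) * f q.2) := by
      have h1 : Continuous fun y : X => (if y = x then (1:ℝ) else 0) :=
        continuous_of_discreteTopology
      exact (h1.comp continuous_fst).mul (f.continuous.comp continuous_snd)
    have hgb : ∀ q : X × A i, ‖(if q.1 = x then (1:ℝ) else 0) * f q.2‖ ≤ ‖f‖ := by
      intro q
      by_cases h : q.1 = x
      · simpa [h] using f.norm_coe_le_norm q.2
      · simp [h, norm_nonneg]
    let g : BoundedContinuousFunction (X × A i) ℝ :=
      BoundedContinuousFunction.ofNormedAddCommGroup _ hgc ‖f‖ hgb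
    have ht := ProbabilityMeasure.tendsto_iff_forall_integral_tendsto.mp hconv g
    have hg : ∀ (ν : ProbabilityMeasure (X × A i)),
        ∫ q, g q ∂(ν : Measure (X × A i)) =
          ∫ q : X × A i, (if q.1 = x then (1:ℝ) else 0) * f q.2 ∂(ν : Measure (X × A i)) :=
      fun ν => rfl
    rw [hg, integral_slice G i hconc0 hd0 x f] at ht
    refine ht.congr fun k => ?_
    rw [hg, integral_slice G i (hconck k) (hdk k) x f]
  have hm : Tendsto (fun k => (marg G i (μk k) x).toReal) atTop
      (𝓝 ((marg G i μ0 x).toReal)) := by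
    have h1 := key (BoundedContinuousFunction.const (A i) (1:ℝ))
    have h2 : ∀ (ν : ProbabilityMeasure (A i)),
        ∫ a, (BoundedContinuousFunction.const (A i) (1:ℝ)) a ∂(ν : Measure (A i)) = 1 := by
      intro ν; simp
    simpa [h2] using h1
  constructor
  · have hcont := (ENNReal.continuous_ofReal.tendsto ((marg G i μ0 x).toReal)).comp hm
    have hne : ∀ (ν : ProbabilityMeasure (X × A i)),
        ENNReal.ofReal ((marg G i ν x).toReal) = marg G i ν x := by
      intro ν
      exact ENNReal.ofReal_toReal (measure_ne_top _ _)
    simpa only [Function.comp_def, hne] using hcont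
  · have hpos : 0 < (marg G i μ0 x).toReal :=
      ENNReal.toReal_pos (marg_pos G hD i hμ0 x).ne' (measure_ne_top _ _)
    refine ProbabilityMeasure.tendsto_iff_forall_integral_tendsto.mpr fun f => ?_
    have hdiv := (key f).div hm hpos.ne'
    rw [mul_div_cancel_left₀ _ hpos.ne'] at hdiv
    refine Tendsto.congr' ?_ hdiv
    filter_upwards [hm.eventually (eventually_gt_nhds hpos)] with k hk
    rw [Pi.div_apply, mul_div_cancel_left₀ _ hk.ne']



end CSGame
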